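/- For every fuse-k-expression φ there exists a glue-k-expression ξ whose value G^ξ is label-preservingly isomorphic to the value G^φ of φ. -/

import Mathlib

/-! ### `k`-labeled graphs and the basic operations on them -/

/-- A `k`-labeled graph: a simple graph together with a labeling of its vertices
by labels from `Fin k`. -/
structure LGraph (k : ℕ) where
  V : Type
  G : SimpleGraph V
  lab : V → Fin k

namespace LGraph

variable {k : ℕ}

/-- The join operation `η_{a,b}`: add all edges between vertices of label `a`
and vertices of label `b`. -/
def join (a b : Fin k) (H : LGraph k) : LGraph k where
  V := H.V
  G :=
    { Adj := fun u v =>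
        H.G.Adj u v ∨ (u ≠ v ∧ ((H.lab u = a ∧ H.lab v = b) ∨ (H.lab u = b ∧ H.lab v = a)))
      symm := by
        refine ⟨?_⟩
        intro u v h
        rcases h with h | ⟨hne, h⟩
        · exact Or.inl (h.symm)
        · refine Or.inr ⟨hne.symm, ?_⟩
          rcases h with ⟨h1, h2⟩ | ⟨h1, h2⟩
          · exact Or.inr ⟨h2, h1⟩
          · exact Or.inl ⟨h2, h1⟩
      loopless := by
        refine ⟨?_⟩
        intro v h
        rcases h with h | ⟨hne, _⟩
        · exact H.G.loopless.irrefl v h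
        · exact hne rfl }
  lab := H.lab

/-- The relabel operation `ρ_{a→b}`: every vertex of label `a` gets label `b` instead. -/
def relabel (a b : Fin k) (H : LGraph k) : LGraph k where
  V := H.V
  G := H.G
  lab := fun v => if H.lab v = a then b else H.lab v

/-- The fuse operation `θ_i`: replace all vertices of label `i` by a single new vertex
(represented by `none`) of label `i` whose neighbourhood is the union of their
neighbourhoods. -/
def fuse (i : Fin k) (H : LGraph k) : LGraph k where
  V := Option {v : H.V // H.lab v ≠ i}
  G :=
    { Adj := fun x y =>
        match x, y with
        | some u, some v => H.G.Adj u.1 v.1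
        | some u, none => ∃ w, H.lab w = i ∧ H.G.Adj u.1 w
        | none, some v => ∃ w, H.lab w = i ∧ H.G.Adj w v.1
        | none, none => False
      symm := by
        refine ⟨?_⟩
        rintro (_ | u) (_ | v) h
        · exact h
        · obtain ⟨w, hw, ha⟩ := h
          exact ⟨w, hw, ha.symm⟩
        · obtain ⟨w, hw, ha⟩ := h
          exact ⟨w, hw, ha.symm⟩
        · exact h.symm
      loopless := by
        refine ⟨?_⟩
        rintro (_ | v) h
        · exact h
        · exact H.G.loopless.irrefl v.1 h }
  lab := fun x =>
    match x with
    | some u => H.lab u.1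
    | none => i

/-- Disjoint union `H1 ⊕ H2` of two `k`-labeled graphs. -/
def union (H1 H2 : LGraph k) : LGraph k where
  V := H1.V ⊕ H2.V
  G := H1.G ⊕g H2.G
  lab := Sum.elim H1.lab H2.lab

/-- Label-preserving isomorphism of `k`-labeled graphs. -/
def LIso (H1 H2 : LGraph k) : Prop :=
  ∃ e : H1.G ≃g H2.G, ∀ v, H2.lab (e v) = H1.lab v

/-- The occurrence of the join operator `η_{a,b}` applied to `H` is not useless,
i.e. it creates at least one new edge. -/
def joinUseful (a b : Fin k) (H : LGraph k) : Prop :=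
  ∃ u v : H.V, u ≠ v ∧ H.lab u = a ∧ H.lab v = b ∧ ¬ H.G.Adj u v

/-- The occurrence of the fuse operator `θ_i` applied to `H` is not useless,
i.e. `H` has at least two vertices of label `i`. -/
def fuseUseful (i : Fin k) (H : LGraph k) : Prop :=
  ∃ u v : H.V, u ≠ v ∧ H.lab u = i ∧ H.lab v = i

/-- The occurrence of a relabel operator `ρ_{a→b}` applied to `H` is not useless,
i.e. `H` has a vertex of label `a`. -/
def relabelUseful (a : Fin k) (H : LGraph k) : Prop :=
  ∃ v : H.V, H.lab v = a

/-- `relabelSeq i [a₁, …, a_q] H = ρ_{a₁→i}(⋯(ρ_{a_q→i}(H))⋯)`. -/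
def relabelSeq (i : Fin k) : List (Fin k) → LGraph k → LGraph k
  | [], H => H
  | a :: as, H => relabel a i (relabelSeq i as H)

/-- None of the relabel operators in `relabelSeq i as H` is useless (this includes
that none of them has the form `ρ_{a→a}`). -/
def relabelSeqUseful (i : Fin k) : List (Fin k) → LGraph k → Prop
  | [], _ => True
  | a :: as, H => relabelSeqUseful i as H ∧ a ≠ i ∧ relabelUseful a (relabelSeq i as H)

end LGraph

/-! ### Fuse-`k`-expressions -/

/-- A fuse-`k`-expression: introduce a vertex, disjoint union, join, relabel, fuse. -/
inductive FuseExpr (k : ℕ) where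
  | intro (i : Fin k)
  | union (φ1 φ2 : FuseExpr k)
  | join (i j : Fin k) (φ : FuseExpr k)
  | relabel (i j : Fin k) (φ : FuseExpr k)
  | fuse (i : Fin k) (φ : FuseExpr k)

namespace FuseExpr

variable {k : ℕ}

/-- The single-vertex `k`-labeled graph with label `i`. -/
def singleVertex (i : Fin k) : LGraph k := ⟨PUnit, ⊥, fun _ => i⟩

/-- The `k`-labeled graph `G^φ` obtained by evaluating a fuse-`k`-expression. -/
def eval : FuseExpr k → LGraph k
  | .intro i => singleVertex i
  | .union φ1 φ2 => LGraph.union φ1.eval φ2.eval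
  | .join i j φ => LGraph.join i j φ.eval
  | .relabel i j φ => LGraph.relabel i j φ.eval
  | .fuse i φ => LGraph.fuse i φ.eval

/-- Well-formedness of a fuse-`k`-expression: joins and relabels use two distinct labels,
and every fuse `θ_i` is applied to a graph having a vertex of label `i`. -/
def WF : FuseExpr k → Prop
  | .intro _ => True
  | .union φ1 φ2 => φ1.WF ∧ φ2.WF
  | .join i j φ => i ≠ j ∧ φ.WF
  | .relabel i j φ => i ≠ j ∧ φ.WF
  | .fuse i φ => φ.WF ∧ ∃ v, φ.eval.lab v = i

end FuseExpr

/-- A graph `G` admits a fuse-`k`-expression if some well-formed fuse-`k`-expression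
evaluates to a labeled graph whose underlying simple graph is isomorphic to `G`. -/
def FuseAdmits {V : Type} (k : ℕ) (G : SimpleGraph V) : Prop :=
  ∃ φ : FuseExpr k, φ.WF ∧ Nonempty (φ.eval.G ≃g G)

/-! ### Glue-`k`-expressions -/

/-- A `k`-labeled graph with titled vertices: vertices are natural-number titles
(titles determine vertex identity), together with a finite vertex set, a finite edge
set and a labeling (only meaningful on `verts`). -/
structure TGraph (k : ℕ) where
  verts : Finset ℕ
  edges : Finset (Sym2 ℕ)
  lab : ℕ → Fin k

/-- The underlying simple graph (on the vertex set) of a titled `k`-labeled graph. -/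
def TGraph.toSG {k : ℕ} (T : TGraph k) : SimpleGraph {v // v ∈ T.verts} where
  Adj u v := u ≠ v ∧ s(u.1, v.1) ∈ T.edges
  symm := by
    refine ⟨?_⟩
    intro u v h
    refine ⟨h.1.symm, ?_⟩
    rw [Sym2.eq_swap]
    exact h.2
  loopless := ⟨fun v h => h.1 rfl⟩

/-- Two titled `k`-labeled graphs are glueable: every shared vertex has the same label
in both graphs and is the unique vertex of its label in each of them. -/
def Glueable {k : ℕ} (T1 T2 : TGraph k) : Prop :=
  ∀ v ∈ T1.verts ∩ T2.verts,
    T1.lab v = T2.lab v ∧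
    (∀ w ∈ T1.verts, T1.lab w = T1.lab v → w = v) ∧
    (∀ w ∈ T2.verts, T2.lab w = T2.lab v → w = v)

/-- A glue-`k`-expression: introduce a titled vertex, join, relabel, glue. -/
inductive GlueExpr (k : ℕ) where
  | intro (v : ℕ) (i : Fin k)
  | join (i j : Fin k) (ξ : GlueExpr k)
  | relabel (i j : Fin k) (ξ : GlueExpr k)
  | glue (ξ1 ξ2 : GlueExpr k)

namespace GlueExpr

variable {k : ℕ}

/-- The titled `k`-labeled graph `G^ξ` obtained by evaluating a glue-`k`-expression. -/
def eval : GlueExpr k → TGraph k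
  | .intro v i => ⟨{v}, ∅, fun _ => i⟩
  | .join i j ξ =>
      let T := ξ.eval
      ⟨T.verts,
       T.edges ∪
         (((T.verts ×ˢ T.verts).filter
            (fun p => p.1 ≠ p.2 ∧ T.lab p.1 = i ∧ T.lab p.2 = j)).image
            (fun p => s(p.1, p.2))),
       T.lab⟩
  | .relabel i j ξ =>
      let T := ξ.eval
      ⟨T.verts, T.edges, fun v => if T.lab v = i then j else T.lab v⟩
  | .glue ξ1 ξ2 =>
      let T1 := ξ1.eval
      let T2 := ξ2.eval
      ⟨T1.verts ∪ T2.verts, T1.edges ∪ T2.edges,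
       fun v => if v ∈ T1.verts then T1.lab v else T2.lab v⟩

/-- Well-formedness of a glue-`k`-expression: joins and relabels use two distinct
labels, and every glue node is applied to two glueable graphs. -/
def WF : GlueExpr k → Prop
  | .intro _ _ => True
  | .join i j ξ => i ≠ j ∧ ξ.WF
  | .relabel i j ξ => i ≠ j ∧ ξ.WF
  | .glue ξ1 ξ2 => ξ1.WF ∧ ξ2.WF ∧ Glueable ξ1.eval ξ2.eval

/-- A glue-`k`-expression is *reduced* if it contains no useless nodes and moreover:
(1) no join `η_{i,j}` is applied to a graph already containing an edge between a
vertex of label `i` and a vertex of label `j`; (2) the two graphs at every glue node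
are edge-disjoint; (3) every shared vertex at a glue node has an incident edge in both
glued graphs. -/
def Reduced : GlueExpr k → Prop
  | .intro _ _ => True
  | .join i j ξ => ξ.Reduced ∧
      -- the join is not useless: it creates at least one new edge
      (∃ u ∈ ξ.eval.verts, ∃ v ∈ ξ.eval.verts,
        u ≠ v ∧ ξ.eval.lab u = i ∧ ξ.eval.lab v = j ∧ s(u, v) ∉ ξ.eval.edges) ∧
      -- property (1): no already existing edge between labels `i` and `j`
      (∀ u ∈ ξ.eval.verts, ∀ v ∈ ξ.eval.verts,
        ξ.eval.lab u = i → ξ.eval.lab v = j → s(u, v) ∉ ξ.eval.edges)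
  | .relabel i _ ξ => ξ.Reduced ∧
      -- the relabel is not useless: some vertex has label `i`
      (∃ v ∈ ξ.eval.verts, ξ.eval.lab v = i)
  | .glue ξ1 ξ2 => ξ1.Reduced ∧ ξ2.Reduced ∧
      -- property (2): the glued graphs are edge-disjoint
      ξ1.eval.edges ∩ ξ2.eval.edges = ∅ ∧
      -- property (3): every shared vertex has an incident edge on both sides
      (∀ v ∈ ξ1.eval.verts ∩ ξ2.eval.verts,
        (∃ e ∈ ξ1.eval.edges, v ∈ e) ∧ (∃ e ∈ ξ2.eval.edges, v ∈ e))

/-- The number of leaves (introduce nodes) of a glue-`k`-expression. -/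
def leafCount : GlueExpr k → ℕ
  | .intro _ _ => 1
  | .join _ _ ξ => ξ.leafCount
  | .relabel _ _ ξ => ξ.leafCount
  | .glue ξ1 ξ2 => ξ1.leafCount + ξ2.leafCount

/-- The number of nodes of the parse tree of a glue-`k`-expression. -/
def nodeCount : GlueExpr k → ℕ
  | .intro _ _ => 1
  | .join _ _ ξ => ξ.nodeCount + 1
  | .relabel _ _ ξ => ξ.nodeCount + 1
  | .glue ξ1 ξ2 => ξ1.nodeCount + ξ2.nodeCount + 1

end GlueExpr

/-- A titled `k`-labeled graph is label-preservingly isomorphic to a `k`-labeled graph. -/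
def TGraph.LIsoTo {k : ℕ} (T : TGraph k) (H : LGraph k) : Prop :=
  ∃ e : T.toSG ≃g H.G, ∀ v, H.lab (e v) = T.lab v.1


/-! ### Auxiliary development for Statement 12 -/

section Statement12Aux

open Classical

variable {k : ℕ}

/-- The invariant relating a glue-expression `ξ` to a labeled graph `H` whose
vertices are merged according to pending classes `cls` (label ↦ class title),
via the quotient map `R` (vertex ↦ title), with `ℓ` giving class labels. -/
def Pack (H : LGraph k) (cls : Fin k → Option ℕ) (n m : ℕ)
    (ξ : GlueExpr k) (ℓ : ℕ → Fin k) (R : H.V → ℕ) : Prop :=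
  ξ.WF ∧
  (∀ t, (∃ v, cls (H.lab v) = some t) → cls (ℓ t) = some t) ∧
  (∀ v t, cls (H.lab v) = some t → R v = t) ∧
  (∀ v, cls (H.lab v) = none → n ≤ R v ∧ R v < m) ∧
  (∀ v w, cls (H.lab v) = none → cls (H.lab w) = none → R v = R w → v = w) ∧
  (∀ x, x ∈ ξ.eval.verts ↔ ∃ v, R v = x) ∧
  (∀ v, ξ.eval.lab (R v) = (cls (H.lab v)).elim (H.lab v) ℓ) ∧
  (∀ x y, s(x,y) ∈ ξ.eval.edges ↔ (x ≠ y ∧ ∃ u v, R u = x ∧ R v = y ∧ H.G.Adj u v))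

lemma pack_align (H : LGraph k) (cls : Fin k → Option ℕ) (n m : ℕ) (ℓ1 : ℕ → Fin k) :
    ∀ (ts : List ℕ) (ξ : GlueExpr k) (ℓ : ℕ → Fin k) (R : H.V → ℕ),
    Pack H cls n m ξ ℓ R →
    ∃ ξ' ℓ', Pack H cls n m ξ' ℓ' R ∧
      (∀ t ∈ ts, cls (ℓ1 t) = some t → ℓ' t = ℓ1 t) := by
  intro ts
  induction ts with
  | nil => exact fun ξ ℓ R hp => ⟨ξ, ℓ, hp, by simp⟩
  | cons t ts ih =>
    intro ξ ℓ R hp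
    obtain ⟨ξ₀, ℓ₀, hp₀, hpost₀⟩ := ih ξ ℓ R hp
    by_cases h1 : cls (ℓ1 t) = some t
    · -- we must retarget `ℓ₀` at `t`
      by_cases hA : ∃ v, cls (H.lab v) = some t
      · by_cases heq : ℓ₀ t = ℓ1 t
        · refine ⟨ξ₀, ℓ₀, hp₀, ?_⟩
          intro t' ht' h1'
          rcases List.mem_cons.mp ht' with rfl | ht'
          · exact heq
          · exact hpost₀ t' ht' h1'
        · obtain ⟨hwf₀, hcompat₀, hP1₀, hP2a₀, hP2b₀, hP3₀, hP4₀, hP5₀⟩ := hp₀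
          refine ⟨.relabel (ℓ₀ t) (ℓ1 t) ξ₀, Function.update ℓ₀ t (ℓ1 t), ?_, ?_⟩
          · refine ⟨⟨heq, hwf₀⟩, ?_, hP1₀, hP2a₀, hP2b₀, hP3₀, ?_, hP5₀⟩
            · intro t' ht'
              by_cases htt : t' = t
              · subst htt; rw [Function.update_self]; exact h1
              · rw [Function.update_of_ne htt]; exact hcompat₀ t' ht'
            · intro v
              have h4 := hP4₀ v
              show (if ξ₀.eval.lab (R v) = ℓ₀ t then ℓ1 t else ξ₀.eval.lab (R v)) = _
              cases hc : cls (H.lab v) with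
              | none =>
                rw [hc] at h4
                simp only [Option.elim_none] at h4
                have hne : ξ₀.eval.lab (R v) ≠ ℓ₀ t := by
                  rw [h4]
                  intro hcon
                  rw [hcon] at hc
                  rw [hcompat₀ t hA] at hc
                  cases hc
                rw [if_neg hne]
                simp only [Option.elim_none]
                exact h4
              | some t' =>
                rw [hc] at h4
                simp only [Option.elim_some] at h4
                simp only [Option.elim_some]
                by_cases htt : t' = t
                · subst htt
                  rw [h4, if_pos rfl]
                  simp [Function.update_self]
                · have hact : ∃ v, cls (H.lab v) = some t' := ⟨v, hc⟩
                  have hne : ξ₀.eval.lab (R v) ≠ ℓ₀ t := by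
                    rw [h4]
                    intro hcon
                    have := hcompat₀ t' hact
                    rw [hcon, hcompat₀ t hA] at this
                    exact htt (Option.some_injective _ this).symm
                  rw [if_neg hne, h4]
                  simp [Function.update_of_ne htt]
          · intro t' ht' h1'
            rcases List.mem_cons.mp ht' with rfl | ht'
            · simp [Function.update_self]
            · by_cases htt : t' = t
              · subst htt; simp [Function.update_self]
              · rw [Function.update_of_ne htt]; exact hpost₀ t' ht' h1'
      · -- `t` is inactive: just change `ℓ₀` at `t`, no vertex is affected
        obtain ⟨hwf₀, hcompat₀, hP1₀, hP2a₀, hP2b₀, hP3₀, hP4₀, hP5₀⟩ := hp₀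
        refine ⟨ξ₀, Function.update ℓ₀ t (ℓ1 t), ?_, ?_⟩
        · refine ⟨hwf₀, ?_, hP1₀, hP2a₀, hP2b₀, hP3₀, ?_, hP5₀⟩
          · intro t' ht'
            have htt : t' ≠ t := fun h => hA (h ▸ ht')
            rw [Function.update_of_ne htt]; exact hcompat₀ t' ht'
          · intro v
            have h4 := hP4₀ v
            cases hc : cls (H.lab v) with
            | none =>
              rw [hc] at h4
              exact h4
            | some t' =>
              have htt : t' ≠ t := fun h => hA ⟨v, h ▸ hc⟩
              rw [hc] at h4
              simp only [Option.elim_some] at h4 ⊢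
              rw [h4]
              simp [Function.update_of_ne htt]
        · intro t' ht' h1'
          rcases List.mem_cons.mp ht' with rfl | ht'
          · simp [Function.update_self]
          · by_cases htt : t' = t
            · subst htt; simp [Function.update_self]
            · rw [Function.update_of_ne htt]; exact hpost₀ t' ht' h1'
    · refine ⟨ξ₀, ℓ₀, hp₀, ?_⟩
      intro t' ht' h1'
      rcases List.mem_cons.mp ht' with rfl | ht'
      · exact absurd h1' h1
      · exact hpost₀ t' ht' h1'

lemma pack_exists : ∀ (φ : FuseExpr k), φ.WF →
    ∀ (cls : Fin k → Option ℕ) (n : ℕ), (∀ x t, cls x = some t → t < n) →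
    ∃ (ξ : GlueExpr k) (ℓ : ℕ → Fin k) (R : φ.eval.V → ℕ) (m : ℕ),
      n ≤ m ∧ Pack φ.eval cls n m ξ ℓ R := by
  intro φ
  induction φ with
  | intro i =>
    intro hwf cls n hbound
    cases hc : cls i with
    | some t =>
      refine ⟨.intro t i, fun _ => i, fun _ => t, n, le_refl n,
        trivial, ?_, ?_, ?_, ?_, ?_, ?_, ?_⟩
      · rintro t' ⟨v, hv⟩
        have hv' : cls i = some t' := hv
        rw [hc] at hv'
        cases hv'
        exact hc
      · intro v t' hv
        have hv' : cls i = some t' := hv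
        rw [hc] at hv'
        cases hv'
        rfl
      · intro v hv
        have hv' : cls i = none := hv
        rw [hc] at hv'
        cases hv'
      · intro v w _ _ _
        rfl
      · intro x
        constructor
        · intro hx
          exact ⟨PUnit.unit, (Finset.mem_singleton.mp hx).symm⟩
        · rintro ⟨v, rfl⟩
          exact Finset.mem_singleton_self t
      · intro v
        show i = (cls i).elim i _
        rw [hc]
        rfl
      · intro x y
        constructor
        · intro hx
          exact absurd hx (Finset.notMem_empty _)
        · rintro ⟨-, u, v, -, -, hadj⟩
          exact absurd hadj (by simp [FuseExpr.eval, FuseExpr.singleVertex]; exact fun h => h)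
    | none =>
      refine ⟨.intro n i, fun _ => i, fun _ => n, n + 1, Nat.le_succ n,
        trivial, ?_, ?_, ?_, ?_, ?_, ?_, ?_⟩
      · rintro t' ⟨v, hv⟩
        have hv' : cls i = some t' := hv
        rw [hc] at hv'
        cases hv'
      · intro v t' hv
        have hv' : cls i = some t' := hv
        rw [hc] at hv'
        cases hv'
      · intro v hv
        exact ⟨le_refl n, Nat.lt_succ_self n⟩
      · intro v w _ _ _
        rfl
      · intro x
        constructor
        · intro hx
          exact ⟨PUnit.unit, (Finset.mem_singleton.mp hx).symm⟩
        · rintro ⟨v, rfl⟩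
          exact Finset.mem_singleton_self n
      · intro v
        show i = (cls i).elim i _
        rw [hc]
        rfl
      · intro x y
        constructor
        · intro hx
          exact absurd hx (Finset.notMem_empty _)
        · rintro ⟨-, u, v, -, -, hadj⟩
          exact absurd hadj (by simp [FuseExpr.eval, FuseExpr.singleVertex]; exact fun h => h)
  | union φ1 φ2 ih1 ih2 =>
    intro hwf cls n hbound
    classical
    obtain ⟨hwf1, hwf2⟩ := hwf
    obtain ⟨ξ1, ℓ1, R1, m1, hnm1, hwfA, hcompat1, hP11, hP2a1, hP2b1, hP31, hP41, hP51⟩ :=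
      ih1 hwf1 cls n hbound
    obtain ⟨ξ2, ℓ2, R2, m2, hnm2, hp2⟩ :=
      ih2 hwf2 cls m1 (fun x t h => lt_of_lt_of_le (hbound x t h) hnm1)
    obtain ⟨ξ2', ℓ2', hp2', halign⟩ :=
      pack_align φ2.eval cls m1 m2 ℓ1 ((List.finRange k).filterMap cls) ξ2 ℓ2 R2 hp2
    obtain ⟨hwfB, hcompat2, hP12, hP2a2, hP2b2, hP32, hP42, hP52⟩ := hp2'
    set A1 : ℕ → Prop := fun t => ∃ v, cls (φ1.eval.lab v) = some t with hA1def
    have halignkey : ∀ t, A1 t → ℓ2' t = ℓ1 t := by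
      rintro t ⟨v, hv⟩
      exact halign t (List.mem_filterMap.mpr ⟨φ1.eval.lab v, List.mem_finRange _, hv⟩)
        (hcompat1 t ⟨v, hv⟩)
    have hv1lt : ∀ x ∈ ξ1.eval.verts, x < m1 := by
      intro x hx
      obtain ⟨v, rfl⟩ := (hP31 x).mp hx
      cases hcv : cls (φ1.eval.lab v) with
      | none => exact (hP2a1 v hcv).2
      | some t =>
        rw [hP11 v t hcv]
        exact lt_of_lt_of_le (hbound _ t hcv) hnm1
    have hA1verts : ∀ t, A1 t → t ∈ ξ1.eval.verts := by
      rintro t ⟨v, hv⟩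
      exact (hP31 t).mpr ⟨v, hP11 v t hv⟩
    have hshared : ∀ x, x ∈ ξ1.eval.verts → x ∈ ξ2'.eval.verts →
        (∃ v, cls (φ1.eval.lab v) = some x) ∧ (∃ v, cls (φ2.eval.lab v) = some x) := by
      intro x hx1 hx2
      obtain ⟨v1, rfl⟩ := (hP31 x).mp hx1
      obtain ⟨v2, h2⟩ := (hP32 _).mp hx2
      cases hcv1 : cls (φ1.eval.lab v1) with
      | none =>
        exfalso
        have hb1 := hP2a1 v1 hcv1
        cases hcv2 : cls (φ2.eval.lab v2) with
        | none =>
          have hb2 := hP2a2 v2 hcv2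
          rw [h2] at hb2
          exact absurd hb2.1 (not_le.mpr hb1.2)
        | some t =>
          have ht := hP12 v2 t hcv2
          rw [ht] at h2
          have htn : t < n := hbound _ t hcv2
          have := hb1.1
          rw [← h2] at this
          exact absurd this (not_le.mpr htn)
      | some t =>
        have h1t := hP11 v1 t hcv1
        cases hcv2 : cls (φ2.eval.lab v2) with
        | none =>
          exfalso
          have hb2 := hP2a2 v2 hcv2
          rw [h2, h1t] at hb2
          exact absurd hb2.1
            (not_le.mpr (lt_of_lt_of_le (lt_of_lt_of_le (hbound _ t hcv1) hnm1) (le_refl m1)))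
        | some t' =>
          have h2t := hP12 v2 t' hcv2
          rw [h2t, h1t] at h2
          constructor
          · exact ⟨v1, by rw [h1t]; exact hcv1⟩
          · refine ⟨v2, ?_⟩
            rw [h1t, ← h2]
            exact hcv2
    have huniq1 : ∀ t, A1 t → ∀ w ∈ ξ1.eval.verts, ξ1.eval.lab w = ℓ1 t → w = t := by
      intro t hA w hw hlab
      obtain ⟨z, rfl⟩ := (hP31 w).mp hw
      have h4 := hP41 z
      rw [hlab] at h4
      cases hcz : cls (φ1.eval.lab z) with
      | none =>
        rw [hcz] at h4
        simp only [Option.elim_none] at h4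
        exfalso
        have e1 := hcompat1 t hA
        rw [h4, hcz] at e1
        cases e1
      | some t' =>
        rw [hcz] at h4
        simp only [Option.elim_some] at h4
        have e1 := hcompat1 t hA
        have e2 := hcompat1 t' ⟨z, hcz⟩
        rw [← h4] at e2
        have htt : t' = t := Option.some_injective _ (e2.symm.trans e1)
        rw [hP11 z t' hcz, htt]
    have huniq2 : ∀ t, (∃ v, cls (φ2.eval.lab v) = some t) →
        ∀ w ∈ ξ2'.eval.verts, ξ2'.eval.lab w = ℓ2' t → w = t := by
      intro t hA w hw hlab
      obtain ⟨z, rfl⟩ := (hP32 w).mp hw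
      have h4 := hP42 z
      rw [hlab] at h4
      cases hcz : cls (φ2.eval.lab z) with
      | none =>
        rw [hcz] at h4
        simp only [Option.elim_none] at h4
        exfalso
        have e1 := hcompat2 t hA
        rw [h4, hcz] at e1
        cases e1
      | some t' =>
        rw [hcz] at h4
        simp only [Option.elim_some] at h4
        have e1 := hcompat2 t hA
        have e2 := hcompat2 t' ⟨z, hcz⟩
        rw [← h4] at e2
        have htt : t' = t := Option.some_injective _ (e2.symm.trans e1)
        rw [hP12 z t' hcz, htt]
    have hglue : Glueable ξ1.eval ξ2'.eval := by
      intro x hx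
      rw [Finset.mem_inter] at hx
      obtain ⟨⟨v1, hv1⟩, ⟨v2, hv2⟩⟩ := hshared x hx.1 hx.2
      have hl1 : ξ1.eval.lab x = ℓ1 x := by
        have h4 := hP41 v1
        rw [hP11 v1 x hv1, hv1] at h4
        simp only [Option.elim_some] at h4
        exact h4
      have hl2 : ξ2'.eval.lab x = ℓ2' x := by
        have h4 := hP42 v2
        rw [hP12 v2 x hv2, hv2] at h4
        simp only [Option.elim_some] at h4
        exact h4
      refine ⟨?_, ?_, ?_⟩
      · rw [hl1, hl2, halignkey x ⟨v1, hv1⟩]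
      · intro w hw hlabw
        rw [hl1] at hlabw
        exact huniq1 x ⟨v1, hv1⟩ w hw hlabw
      · intro w hw hlabw
        rw [hl2, halignkey x ⟨v1, hv1⟩] at hlabw
        rw [← halignkey x ⟨v1, hv1⟩] at hlabw
        exact huniq2 x ⟨v2, hv2⟩ w hw hlabw
    refine ⟨.glue ξ1 ξ2', fun t => if A1 t then ℓ1 t else ℓ2' t, Sum.elim R1 R2,
      m2, le_trans hnm1 hnm2, ⟨hwfA, hwfB, hglue⟩, ?_, ?_, ?_, ?_, ?_, ?_, ?_⟩
    · rintro t ⟨x, hx⟩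
      show cls (if A1 t then ℓ1 t else ℓ2' t) = some t
      by_cases hA : A1 t
      · rw [if_pos hA]
        exact hcompat1 t hA
      · rw [if_neg hA]
        cases x with
        | inl v => exact absurd ⟨v, hx⟩ hA
        | inr v => exact hcompat2 t ⟨v, hx⟩
    · intro v t hv
      cases v with
      | inl v => exact hP11 v t hv
      | inr v => exact hP12 v t hv
    · intro v hv
      cases v with
      | inl v =>
        have h := hP2a1 v hv
        exact ⟨h.1, lt_of_lt_of_le h.2 hnm2⟩
      | inr v =>
        have h := hP2a2 v hv
        exact ⟨le_trans hnm1 h.1, h.2⟩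
    · intro v w hv hw hr
      cases v with
      | inl v =>
        cases w with
        | inl w => exact congrArg Sum.inl (hP2b1 v w hv hw hr)
        | inr w =>
          exfalso
          have h1 := (hP2a1 v hv).2
          have h2 := (hP2a2 w hw).1
          have hr' : R1 v = R2 w := hr
          omega
      | inr v =>
        cases w with
        | inl w =>
          exfalso
          have h1 := (hP2a2 v hv).1
          have h2 := (hP2a1 w hw).2
          have hr' : R2 v = R1 w := hr
          omega
        | inr w => exact congrArg Sum.inr (hP2b2 v w hv hw hr)
    · intro x
      show x ∈ ξ1.eval.verts ∪ ξ2'.eval.verts ↔ _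
      rw [Finset.mem_union, hP31, hP32]
      constructor
      · rintro (⟨v, rfl⟩ | ⟨v, rfl⟩)
        exacts [⟨Sum.inl v, rfl⟩, ⟨Sum.inr v, rfl⟩]
      · rintro ⟨v, rfl⟩
        cases v with
        | inl v => exact Or.inl ⟨v, rfl⟩
        | inr v => exact Or.inr ⟨v, rfl⟩
    · intro v
      cases v with
      | inl v =>
        have hmem : R1 v ∈ ξ1.eval.verts := (hP31 _).mpr ⟨v, rfl⟩
        have h4 := hP41 v
        show (if R1 v ∈ ξ1.eval.verts then ξ1.eval.lab (R1 v) else ξ2'.eval.lab (R1 v))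
            = (cls (φ1.eval.lab v)).elim (φ1.eval.lab v) _
        rw [if_pos hmem, h4]
        cases hcv : cls (φ1.eval.lab v) with
        | none => simp only [Option.elim_none]
        | some t =>
          simp only [Option.elim_some]
          rw [if_pos (⟨v, hcv⟩ : A1 t)]
      | inr v =>
        show (if R2 v ∈ ξ1.eval.verts then ξ1.eval.lab (R2 v) else ξ2'.eval.lab (R2 v))
            = (cls (φ2.eval.lab v)).elim (φ2.eval.lab v) _
        cases hcv : cls (φ2.eval.lab v) with
        | none =>
          have hnot : R2 v ∉ ξ1.eval.verts := by
            intro hmem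
            exact absurd (hv1lt _ hmem) (not_lt.mpr (hP2a2 v hcv).1)
          rw [if_neg hnot, hP42 v, hcv]
          simp only [Option.elim_none]
        | some t =>
          have ht2 : R2 v = t := hP12 v t hcv
          simp only [Option.elim_some]
          by_cases hmem : R2 v ∈ ξ1.eval.verts
          · obtain ⟨⟨z, hz⟩, -⟩ := hshared _ hmem ((hP32 _).mpr ⟨v, rfl⟩)
            rw [if_pos hmem]
            have h1z : R1 z = R2 v := hP11 z (R2 v) hz
            rw [← h1z, hP41 z, hz]
            simp only [Option.elim_some]
            rw [ht2] at hz ⊢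
            rw [if_pos (⟨z, hz⟩ : A1 t)]
          · rw [if_neg hmem, hP42 v, hcv]
            simp only [Option.elim_some]
            have hnA : ¬ A1 t := by
              intro hA
              apply hmem
              rw [ht2]
              exact hA1verts t hA
            rw [if_neg hnA]
    · intro x y
      show s(x,y) ∈ ξ1.eval.edges ∪ ξ2'.eval.edges ↔ _
      rw [Finset.mem_union]
      constructor
      · rintro (h | h)
        · obtain ⟨hxy, u, v, hu, hv, hadj⟩ := (hP51 x y).mp h
          refine ⟨hxy, Sum.inl u, Sum.inl v, hu, hv, ?_⟩
          exact hadj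
        · obtain ⟨hxy, u, v, hu, hv, hadj⟩ := (hP52 x y).mp h
          refine ⟨hxy, Sum.inr u, Sum.inr v, hu, hv, ?_⟩
          exact hadj
      · rintro ⟨hxy, u, v, hu, hv, hadj⟩
        cases u with
        | inl u =>
          cases v with
          | inl v => exact Or.inl ((hP51 x y).mpr ⟨hxy, u, v, hu, hv, hadj⟩)
          | inr v => exact Bool.noConfusion hadj
        | inr u =>
          cases v with
          | inl v => exact Bool.noConfusion hadj
          | inr v => exact Or.inr ((hP52 x y).mpr ⟨hxy, u, v, hu, hv, hadj⟩)
  | join a b φ ih =>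
    intro hwf cls n hbound
    obtain ⟨hab, hwf'⟩ := hwf
    obtain ⟨ξ', ℓ, R, m, hnm, hwf₀, hcompat, hP1, hP2a, hP2b, hP3, hP4, hP5⟩ :=
      ih hwf' cls n hbound
    -- helper: trivial transfer when the join creates no relevant structure
    have hNoEmit : (∀ (u v : φ.eval.V), φ.eval.lab u = a → φ.eval.lab v = b →
          R u ≠ R v → False) →
        ∃ (ξ : GlueExpr k) (ℓ' : ℕ → Fin k) (R' : (FuseExpr.join a b φ).eval.V → ℕ) (m' : ℕ),
          n ≤ m' ∧ Pack (FuseExpr.join a b φ).eval cls n m' ξ ℓ' R' := by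
      intro hno
      refine ⟨ξ', ℓ, R, m, hnm, hwf₀, hcompat, hP1, hP2a, hP2b, hP3, hP4, ?_⟩
      intro x y
      rw [hP5 x y]
      constructor
      · rintro ⟨hxy, u, v, hu, hv, hadj⟩
        exact ⟨hxy, u, v, hu, hv, Or.inl hadj⟩
      · rintro ⟨hxy, u, v, hu, hv, hadj⟩
        refine ⟨hxy, u, v, hu, hv, ?_⟩
        rcases hadj with h | ⟨hne, hpat⟩
        · exact h
        · exfalso
          rcases hpat with ⟨h1, h2⟩ | ⟨h1, h2⟩
          · exact hno u v h1 h2 (by rw [hu, hv]; exact hxy)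
          · exact hno v u h2 h1 (by rw [hu, hv]; exact fun h => hxy h.symm)
    by_cases ha : ∃ u, φ.eval.lab u = a
    · by_cases hb : ∃ u, φ.eval.lab u = b
      · by_cases hsame : ∃ t, cls a = some t ∧ cls b = some t
        · -- `a` and `b` belong to the same class: the new edges disappear when merging
          obtain ⟨t, hca, hcb⟩ := hsame
          apply hNoEmit
          intro u v h1 h2 hne
          apply hne
          rw [hP1 u t (by rw [h1]; exact hca), hP1 v t (by rw [h2]; exact hcb)]
        · -- emit a join between the (possibly merged) representatives
          set a' : Fin k := (cls a).elim a ℓ with ha'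
          set b' : Fin k := (cls b).elim b ℓ with hb'
          have hacls : cls a' = cls a := by
            cases hca : cls a with
            | none =>
              rw [ha', hca]
              simp only [Option.elim_none]
              exact hca
            | some t =>
              rw [ha', hca]
              simp only [Option.elim_some]
              obtain ⟨u, hu⟩ := ha
              exact hcompat t ⟨u, by rw [hu]; exact hca⟩
          have hbcls : cls b' = cls b := by
            cases hcb : cls b with
            | none =>
              rw [hb', hcb]
              simp only [Option.elim_none]
              exact hcb
            | some t =>
              rw [hb', hcb]
              simp only [Option.elim_some]
              obtain ⟨u, hu⟩ := hb
              exact hcompat t ⟨u, by rw [hu]; exact hcb⟩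
          have hab' : a' ≠ b' := by
            intro h
            cases hca : cls a with
            | none =>
              cases hcb : cls b with
              | none =>
                rw [ha', hb', hca, hcb] at h
                exact hab h
              | some t =>
                have := hacls.symm.trans ((congrArg cls h).trans hbcls)
                rw [hca, hcb] at this
                cases this
            | some t =>
              cases hcb : cls b with
              | none =>
                have := hacls.symm.trans ((congrArg cls h).trans hbcls)
                rw [hca, hcb] at this
                cases this
              | some t' =>
                have := hacls.symm.trans ((congrArg cls h).trans hbcls)
                rw [hca, hcb] at this
                exact hsame ⟨t', (Option.some_injective _ this) ▸ hca, hcb⟩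
          -- characterization of vertices carrying the representative labels
          have char : ∀ (e : Fin k), (∃ u, φ.eval.lab u = e) → ∀ p : ℕ,
              (p ∈ ξ'.eval.verts ∧ ξ'.eval.lab p = (cls e).elim e ℓ) ↔
                ∃ u, R u = p ∧ φ.eval.lab u = e := by
            intro e he p
            constructor
            · rintro ⟨hmem, hlab⟩
              obtain ⟨w, rfl⟩ := (hP3 p).mp hmem
              have h4 := hP4 w
              rw [hlab] at h4
              cases hce : cls e with
              | none =>
                rw [hce] at h4
                simp only [Option.elim_none] at h4
                cases hcw : cls (φ.eval.lab w) with
                | none =>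
                  rw [hcw] at h4
                  simp only [Option.elim_none] at h4
                  exact ⟨w, rfl, h4.symm⟩
                | some t' =>
                  rw [hcw] at h4
                  simp only [Option.elim_some] at h4
                  exfalso
                  have hc' : cls (ℓ t') = some t' := hcompat t' ⟨w, hcw⟩
                  rw [← h4, hce] at hc'
                  cases hc'
              | some te =>
                obtain ⟨u₀, hu₀⟩ := he
                have hte : cls (ℓ te) = some te :=
                  hcompat te ⟨u₀, by rw [hu₀]; exact hce⟩
                rw [hce] at h4
                simp only [Option.elim_some] at h4
                cases hcw : cls (φ.eval.lab w) with
                | none =>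
                  rw [hcw] at h4
                  simp only [Option.elim_none] at h4
                  exfalso
                  rw [h4, hcw] at hte
                  cases hte
                | some t' =>
                  rw [hcw] at h4
                  simp only [Option.elim_some] at h4
                  have hc' : cls (ℓ t') = some t' := hcompat t' ⟨w, hcw⟩
                  rw [← h4] at hc'
                  have htt : t' = te := Option.some_injective _ (hc'.symm.trans hte)
                  subst htt
                  refine ⟨u₀, ?_, hu₀⟩
                  rw [hP1 u₀ t' (by rw [hu₀]; exact hce), hP1 w t' hcw]
            · rintro ⟨u, rfl, hu⟩
              refine ⟨(hP3 (R u)).mpr ⟨u, rfl⟩, ?_⟩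
              have h4 := hP4 u
              rw [hu] at h4
              exact h4
          refine ⟨.join a' b' ξ', ℓ, R, m, hnm, ⟨hab', hwf₀⟩, hcompat, hP1, hP2a,
            hP2b, hP3, hP4, ?_⟩
          intro x y
          show s(x,y) ∈ ξ'.eval.edges ∪ _ ↔ _
          rw [Finset.mem_union]
          constructor
          · rintro (hold | hnew)
            · obtain ⟨hxy, u, v, hu, hv, hadj⟩ := (hP5 x y).mp hold
              exact ⟨hxy, u, v, hu, hv, Or.inl hadj⟩
            · obtain ⟨⟨p, q⟩, hpq, heq⟩ := Finset.mem_image.mp hnew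
              obtain ⟨hpqmem, hne, hpa, hqb⟩ :
                  ((p, q) ∈ ξ'.eval.verts ×ˢ ξ'.eval.verts) ∧ p ≠ q ∧
                    ξ'.eval.lab p = a' ∧ ξ'.eval.lab q = b' := by
                have := Finset.mem_filter.mp hpq
                exact ⟨this.1, this.2.1, this.2.2.1, this.2.2.2⟩
              obtain ⟨hpv, hqv⟩ := Finset.mem_product.mp hpqmem
              obtain ⟨u, hu, hua⟩ := (char a ha p).mp ⟨hpv, hpa⟩
              obtain ⟨v, hv, hvb⟩ := (char b hb q).mp ⟨hqv, hqb⟩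
              have huv : u ≠ v := by
                intro h
                rw [h, hvb] at hua
                exact hab hua.symm
              rcases Sym2.eq_iff.mp heq with ⟨hpx, hqy⟩ | ⟨hpy, hqx⟩
              · subst hpx; subst hqy
                exact ⟨hne, u, v, hu, hv, Or.inr ⟨huv, Or.inl ⟨hua, hvb⟩⟩⟩
              · subst hpy; subst hqx
                exact ⟨fun h => hne h.symm, v, u, hv, hu,
                  Or.inr ⟨fun h => huv h.symm, Or.inr ⟨hvb, hua⟩⟩⟩
          · rintro ⟨hxy, u, v, hu, hv, hadj⟩
            rcases hadj with h | ⟨hne, hpat⟩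
            · exact Or.inl ((hP5 x y).mpr ⟨hxy, u, v, hu, hv, h⟩)
            · right
              rcases hpat with ⟨h1, h2⟩ | ⟨h1, h2⟩
              · have hx1 := (char a ha x).mpr ⟨u, hu, h1⟩
                have hy1 := (char b hb y).mpr ⟨v, hv, h2⟩
                refine Finset.mem_image.mpr ⟨(x, y), Finset.mem_filter.mpr
                  ⟨Finset.mem_product.mpr ⟨hx1.1, hy1.1⟩, hxy, hx1.2, hy1.2⟩, rfl⟩
              · have hy1 := (char a ha y).mpr ⟨v, hv, h2⟩
                have hx1 := (char b hb x).mpr ⟨u, hu, h1⟩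
                refine Finset.mem_image.mpr ⟨(y, x), Finset.mem_filter.mpr
                  ⟨Finset.mem_product.mpr ⟨hy1.1, hx1.1⟩, fun h => hxy h.symm, hy1.2, hx1.2⟩,
                  Sym2.eq_swap⟩
      · -- no vertex of label `b`: nothing to do
        apply hNoEmit
        intro u v h1 h2 hne
        exact hb ⟨v, h2⟩
    · -- no vertex of label `a`: nothing to do
      apply hNoEmit
      intro u v h1 h2 hne
      exact ha ⟨u, h1⟩
  | relabel a b φ ih =>
    intro hwf cls n hbound
    obtain ⟨hab, hwf'⟩ := hwf
    obtain ⟨ξ', ℓ', R', m, hnm, hwf₀, hcompat, hP1, hP2a, hP2b, hP3, hP4, hP5⟩ :=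
      ih hwf' (fun x => cls (if x = a then b else x)) n (fun x t h => hbound _ t h)
    refine ⟨.relabel a b ξ', fun t => if ℓ' t = a then b else ℓ' t, R', m, hnm,
      ⟨hab, hwf₀⟩, hcompat, hP1, hP2a, hP2b, hP3, ?_, hP5⟩
    intro v
    have h4 := hP4 v
    show (if ξ'.eval.lab (R' v) = a then b else ξ'.eval.lab (R' v)) =
      (cls (if φ.eval.lab v = a then b else φ.eval.lab v)).elim
        (if φ.eval.lab v = a then b else φ.eval.lab v) (fun t => if ℓ' t = a then b else ℓ' t)
    rw [h4]
    cases hcv : cls (if φ.eval.lab v = a then b else φ.eval.lab v) with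
    | none =>
      have : (fun x => cls (if x = a then b else x)) (φ.eval.lab v) = none := hcv
      rw [this]
      rfl
    | some t =>
      have : (fun x => cls (if x = a then b else x)) (φ.eval.lab v) = some t := hcv
      rw [this]
      rfl
  | fuse j φ ih =>
    intro hwf cls n hbound
    obtain ⟨hwf', v0, hv0⟩ := hwf
    cases hc : cls j with
    | some t0 =>
      obtain ⟨ξ', ℓ, R', m, hnm, hwf₀, hcompat, hP1, hP2a, hP2b, hP3, hP4, hP5⟩ :=
        ih hwf' cls n hbound
      have hR0 : R' v0 = t0 := hP1 v0 t0 (by rw [hv0]; exact hc)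
      refine ⟨ξ', ℓ, fun x => x.elim t0 (fun u => R' u.1), m, hnm, hwf₀,
        ?_, ?_, ?_, ?_, ?_, ?_, ?_⟩
      · rintro t ⟨x, hx⟩
        cases x with
        | none =>
          have hx' : cls j = some t := hx
          rw [hc] at hx'
          cases hx'
          exact hcompat t0 ⟨v0, by rw [hv0]; exact hc⟩
        | some u => exact hcompat t ⟨u.1, hx⟩
      · intro v t hv
        cases v with
        | none =>
          have hv' : cls j = some t := hv
          rw [hc] at hv'
          cases hv'
          rfl
        | some u => exact hP1 u.1 t hv
      · intro v hv
        cases v with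
        | none =>
          have hv' : cls j = none := hv
          rw [hc] at hv'
          cases hv'
        | some u => exact hP2a u.1 hv
      · intro v w hv hw hr
        cases v with
        | none =>
          have hv' : cls j = none := hv
          rw [hc] at hv'
          cases hv'
        | some u =>
          cases w with
          | none =>
            have hw' : cls j = none := hw
            rw [hc] at hw'
            cases hw'
          | some z => exact congrArg some (Subtype.ext (hP2b u.1 z.1 hv hw hr))
      · intro x
        rw [hP3 x]
        constructor
        · rintro ⟨v, rfl⟩
          by_cases hj : φ.eval.lab v = j
          · exact ⟨none, (hP1 v t0 (by rw [hj]; exact hc)).symm⟩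
          · exact ⟨some ⟨v, hj⟩, rfl⟩
        · rintro ⟨v, rfl⟩
          cases v with
          | none => exact ⟨v0, hR0⟩
          | some u => exact ⟨u.1, rfl⟩
      · intro v
        cases v with
        | none =>
          show ξ'.eval.lab t0 = (cls j).elim j ℓ
          have h4 := hP4 v0
          rw [hv0, hR0] at h4
          exact h4
        | some u => exact hP4 u.1
      · intro x y
        rw [hP5 x y]
        constructor
        · rintro ⟨hxy, u', v', hu, hv, hadj⟩
          refine ⟨hxy, ?_⟩
          by_cases hju : φ.eval.lab u' = j
          · have hru : R' u' = t0 := hP1 u' t0 (by rw [hju]; exact hc)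
            by_cases hjv : φ.eval.lab v' = j
            · exfalso
              apply hxy
              rw [← hu, ← hv, hru, hP1 v' t0 (by rw [hjv]; exact hc)]
            · refine ⟨none, some ⟨v', hjv⟩, ?_, hv, ?_⟩
              · show t0 = x
                rw [← hu, hru]
              · exact ⟨u', hju, hadj⟩
          · by_cases hjv : φ.eval.lab v' = j
            · refine ⟨some ⟨u', hju⟩, none, hu, ?_, ?_⟩
              · show t0 = y
                rw [← hv, hP1 v' t0 (by rw [hjv]; exact hc)]
              · exact ⟨v', hjv, hadj⟩
            · exact ⟨some ⟨u', hju⟩, some ⟨v', hjv⟩, hu, hv, hadj⟩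
        · rintro ⟨hxy, u, v, hu, hv, hadj⟩
          cases u with
          | none =>
            cases v with
            | none => exact hadj.elim
            | some w =>
              obtain ⟨z, hz, hadj'⟩ := hadj
              have hu' : t0 = x := hu
              refine ⟨hxy, z, w.1, ?_, hv, hadj'⟩
              rw [← hu']
              exact hP1 z t0 (by rw [hz]; exact hc)
          | some w =>
            cases v with
            | none =>
              obtain ⟨z, hz, hadj'⟩ := hadj
              have hv' : t0 = y := hv
              refine ⟨hxy, w.1, z, hu, ?_, hadj'⟩
              rw [← hv']
              exact hP1 z t0 (by rw [hz]; exact hc)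
            | some z => exact ⟨hxy, w.1, z.1, hu, hv, hadj⟩
    | none =>
      obtain ⟨ξ', ℓ, R', m, hnm, hwf₀, hcompat, hP1, hP2a, hP2b, hP3, hP4, hP5⟩ :=
        ih hwf' (fun x => if x = j then some n else cls x) (n + 1)
          (by
            intro x t h
            have h' : (if x = j then some n else cls x) = some t := h
            by_cases hx : x = j
            · rw [if_pos hx] at h'
              cases h'
              exact Nat.lt_succ_self n
            · rw [if_neg hx] at h'
              exact Nat.lt_succ_of_lt (hbound x t h'))
      have hR0 : R' v0 = n := hP1 v0 n (by simp [hv0])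
      have hℓn : ℓ n = j := by
        have h : (if ℓ n = j then some n else cls (ℓ n)) = some n :=
          hcompat n ⟨v0, by simp [hv0]⟩
        by_cases hj : ℓ n = j
        · exact hj
        · rw [if_neg hj] at h
          exact absurd (hbound _ n h) (lt_irrefl n)
      refine ⟨ξ', ℓ, fun x => x.elim n (fun u => R' u.1), m,
        le_trans (Nat.le_succ n) hnm, hwf₀, ?_, ?_, ?_, ?_, ?_, ?_, ?_⟩
      · rintro t ⟨x, hx⟩
        cases x with
        | none =>
          have hx' : cls j = some t := hx
          rw [hc] at hx'
          cases hx'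
        | some u =>
          have hx' : cls (φ.eval.lab u.1) = some t := hx
          have h : (if ℓ t = j then some n else cls (ℓ t)) = some t :=
            hcompat t ⟨u.1, by simp only [if_neg u.2]; exact hx'⟩
          by_cases hj : ℓ t = j
          · rw [if_pos hj] at h
            cases h
            exact absurd (hbound _ _ hx') (lt_irrefl n)
          · rw [if_neg hj] at h
            exact h
      · intro v t hv
        cases v with
        | none =>
          have hv' : cls j = some t := hv
          rw [hc] at hv'
          cases hv'
        | some u =>
          refine hP1 u.1 t ?_
          simp only [if_neg u.2]
          exact hv
      · intro v hv
        cases v with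
        | none => exact ⟨le_refl n, lt_of_lt_of_le (Nat.lt_succ_self n) hnm⟩
        | some u =>
          have h := hP2a u.1 (by simp only [if_neg u.2]; exact hv)
          exact ⟨le_trans (Nat.le_succ n) h.1, h.2⟩
      · intro v w hv hw hr
        cases v with
        | none =>
          cases w with
          | none => rfl
          | some z =>
            exfalso
            have h := (hP2a z.1 (by simp only [if_neg z.2]; exact hw)).1
            have hr' : n = R' z.1 := hr
            rw [← hr'] at h
            exact Nat.not_succ_le_self n h
        | some u =>
          cases w with
          | none =>
            exfalso
            have h := (hP2a u.1 (by simp only [if_neg u.2]; exact hv)).1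
            have hr' : R' u.1 = n := hr
            rw [hr'] at h
            exact Nat.not_succ_le_self n h
          | some z =>
            refine congrArg some (Subtype.ext (hP2b u.1 z.1 ?_ ?_ hr))
            · simp only [if_neg u.2]
              exact hv
            · simp only [if_neg z.2]
              exact hw
      · intro x
        rw [hP3 x]
        constructor
        · rintro ⟨v, rfl⟩
          by_cases hj : φ.eval.lab v = j
          · exact ⟨none, (hP1 v n (by simp [hj])).symm⟩
          · exact ⟨some ⟨v, hj⟩, rfl⟩
        · rintro ⟨v, rfl⟩
          cases v with
          | none => exact ⟨v0, hR0⟩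
          | some u => exact ⟨u.1, rfl⟩
      · intro v
        cases v with
        | none =>
          show ξ'.eval.lab n = (cls j).elim j ℓ
          rw [hc]
          simp only [Option.elim_none]
          have h4 := hP4 v0
          rw [hv0, hR0] at h4
          simp only [eq_self_iff_true, if_true, Option.elim_some] at h4
          rw [h4, hℓn]
        | some u =>
          have h4 := hP4 u.1
          show ξ'.eval.lab (R' u.1) =
            (cls (φ.eval.lab u.1)).elim (φ.eval.lab u.1) ℓ
          simp only [if_neg u.2] at h4
          exact h4
      · intro x y
        rw [hP5 x y]
        constructor
        · rintro ⟨hxy, u', v', hu, hv, hadj⟩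
          refine ⟨hxy, ?_⟩
          by_cases hju : φ.eval.lab u' = j
          · have hru : R' u' = n := hP1 u' n (by simp [hju])
            by_cases hjv : φ.eval.lab v' = j
            · exfalso
              apply hxy
              rw [← hu, ← hv, hru, hP1 v' n (by simp [hjv])]
            · refine ⟨none, some ⟨v', hjv⟩, ?_, hv, ?_⟩
              · show n = x
                rw [← hu, hru]
              · exact ⟨u', hju, hadj⟩
          · by_cases hjv : φ.eval.lab v' = j
            · refine ⟨some ⟨u', hju⟩, none, hu, ?_, ?_⟩
              · show n = y
                rw [← hv, hP1 v' n (by simp [hjv])]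
              · exact ⟨v', hjv, hadj⟩
            · exact ⟨some ⟨u', hju⟩, some ⟨v', hjv⟩, hu, hv, hadj⟩
        · rintro ⟨hxy, u, v, hu, hv, hadj⟩
          cases u with
          | none =>
            cases v with
            | none => exact hadj.elim
            | some w =>
              obtain ⟨z, hz, hadj'⟩ := hadj
              have hu' : n = x := hu
              refine ⟨hxy, z, w.1, ?_, hv, hadj'⟩
              rw [← hu']
              exact hP1 z n (by simp [hz])
          | some w =>
            cases v with
            | none =>
              obtain ⟨z, hz, hadj'⟩ := hadj
              have hv' : n = y := hv
              refine ⟨hxy, w.1, z, hu, ?_, hadj'⟩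
              rw [← hv']
              exact hP1 z n (by simp [hz])
            | some z => exact ⟨hxy, w.1, z.1, hu, hv, hadj⟩

end Statement12Aux

/-- For every fuse-`k`-expression `φ` there exists a glue-`k`-expression
`ξ` whose value is label-preservingly isomorphic to the value of `φ`. -/
theorem exists_glue_expression {k : ℕ} (φ : FuseExpr k) (hwf : φ.WF) :
    ∃ ξ : GlueExpr k, ξ.WF ∧ ξ.eval.LIsoTo φ.eval := by
  obtain ⟨ξ, ℓ, R, m, -, hwf', hcompat, hP1, hP2a, hP2b, hP3, hP4, hP5⟩ :=
    pack_exists φ hwf (fun _ => none) 0 (fun x t h => by simp at h)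
  refine ⟨ξ, hwf', ?_⟩
  have hinj : Function.Injective R := fun u v h => hP2b u v rfl rfl h
  have hmem : ∀ v, R v ∈ ξ.eval.verts := fun v => (hP3 (R v)).mpr ⟨v, rfl⟩
  have hbij : Function.Bijective
      (fun v : φ.eval.V => (⟨R v, hmem v⟩ : {x // x ∈ ξ.eval.verts})) := by
    constructor
    · intro u v h
      exact hinj (congrArg Subtype.val h)
    · rintro ⟨x, hx⟩
      obtain ⟨v, rfl⟩ := (hP3 x).mp hx
      exact ⟨v, rfl⟩
  let e0 : φ.eval.V ≃ {x // x ∈ ξ.eval.verts} := Equiv.ofBijective _ hbij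
  have hrel : ∀ u v, ξ.eval.toSG.Adj (e0 u) (e0 v) ↔ φ.eval.G.Adj u v := by
    intro u v
    show ((⟨R u, hmem u⟩ : {x // x ∈ ξ.eval.verts}) ≠ ⟨R v, hmem v⟩)
        ∧ s(R u, R v) ∈ ξ.eval.edges ↔ _
    constructor
    · rintro ⟨hne, he⟩
      obtain ⟨-, u', v', hu', hv', hadj⟩ := (hP5 _ _).mp he
      rwa [hinj hu', hinj hv'] at hadj
    · intro hadj
      have hne : R u ≠ R v := fun h => φ.eval.G.loopless.irrefl v (hinj h ▸ hadj)
      exact ⟨fun h => hne (congrArg Subtype.val h),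
        (hP5 _ _).mpr ⟨hne, u, v, rfl, rfl, hadj⟩⟩
  let f : φ.eval.G ≃g ξ.eval.toSG := ⟨e0, hrel _ _⟩
  refine ⟨f.symm, ?_⟩
  intro v
  obtain ⟨u, rfl⟩ := f.surjective v
  have : f.symm (f u) = u := f.symm_apply_apply u
  rw [this]
  have h4 := hP4 u
  simp only [Option.elim_none] at h4
  have : (f u).1 = R u := rfl
  rw [this, h4]
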